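/- For a nonzero ordinal γ and any ordinal δ < ω^γ, the ordinal ω^γ (with order topology) is not homeomorphic to any subspace of δ. -/

import Mathlib

open Set Ordinal
open scoped Cardinal

noncomputable section

universe u

/-- Natural addition on ordinals `a ♯ b` (Hessenberg sum), as formerly in Mathlib's
`Mathlib.SetTheory.Ordinal.NaturalOps` (since removed from Mathlib). -/
def Ordinal.nadd (a b : Ordinal.{u}) : Ordinal.{u} :=
  max (⨆ x : Iio a, Order.succ (Ordinal.nadd x.1 b)) (⨆ x : Iio b, Order.succ (Ordinal.nadd a x.1))
termination_by (a, b)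
decreasing_by
  · exact Prod.Lex.left _ _ x.2
  · exact Prod.Lex.right _ x.2

infixl:65 " ♯ " => Ordinal.nadd

/-- Derived set (non-isolated points) of a set of ordinals, as a subspace. -/
def deriv' (s : Set Ordinal.{0}) : Set Ordinal.{0} := {x ∈ s | x ∈ closure (s \ {x})}

/-- Iterated Cantor–Bendixson derivative. -/
def iterDeriv (s : Set Ordinal.{0}) (o : Ordinal.{0}) : Set Ordinal.{0} :=
  Ordinal.limitRecOn o s (fun _ ih => deriv' ih) (fun o _ ih => ⋂ (p : Ordinal.{0}) (h : p < o), ih p h)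

/-- `s` contains a homeomorphic copy of the ordinal `α` (with its order topology). -/
def HomeoCopy (α : Ordinal.{0}) (s : Set Ordinal.{0}) : Prop :=
  ∃ t : Set Ordinal, t ⊆ s ∧ Nonempty ((Iio α : Set Ordinal.{0}) ≃ₜ t)

/-- Two ordinals are biembeddable: each is homeomorphic to a subspace of the other. -/
def Biembed (α β : Ordinal.{0}) : Prop := HomeoCopy α (Iio β) ∧ HomeoCopy β (Iio α)

/-- Two sets of ordinals are order-homeomorphic: there is an order-preserving homeomorphism. -/
def OrderHomeo (X Y : Set Ordinal.{0}) : Prop :=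
  ∃ e : X ≃ₜ Y, ∀ a b : X, a ≤ b ↔ e a ≤ e b

/-- An ordinal is order-reinforcing. -/
def OrderReinforcing (α : Ordinal.{0}) : Prop :=
  ∀ X : Set Ordinal, Nonempty ((Iio α : Set Ordinal.{0}) ≃ₜ X) → ∃ Y ⊆ X, OrderHomeo (Iio α) Y

/-- The Cantor–Bendixson rank of an ordinal: the least exponent in its Cantor normal form. -/
def CB (x : Ordinal.{0}) : Ordinal := if x = 0 then 0 else sSup {γ | (ω : Ordinal.{0}) ^ γ ∣ x}

/-- The natural (Hessenberg) sum of a finite family of ordinals. -/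
def natSumFam {k : ℕ} (α : Fin k → Ordinal.{0}) : Ordinal := (List.ofFn α).foldr (· ♯ ·) 0

/-- The Milner–Rado sum of a finite family of ordinals. -/
def mrSumFam {k : ℕ} (α : Fin k → Ordinal.{0}) : Ordinal :=
  sInf {δ | ∀ β : Fin k → Ordinal, (∀ i, β i < α i) → δ ≠ natSumFam β}

/-- The topological pigeonhole relation `β → (top α i)¹` for finitely many colours. -/
def TopPH {k : ℕ} (β : Ordinal.{0}) (α : Fin k → Ordinal.{0}) : Prop :=
  ∀ c : Ordinal → Fin k, ∃ i, HomeoCopy (α i) (Iio β ∩ c ⁻¹' {i})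

/-- The topological pigeonhole relation with an arbitrary index type of colours. -/
def TopPHFam {ι : Type*} (β : Ordinal.{0}) (α : ι → Ordinal.{0}) : Prop :=
  ∀ c : Ordinal → ι, ∃ i, HomeoCopy (α i) (Iio β ∩ c ⁻¹' {i})

/-- `ω̄[γ, m]`: `ω ^ γ * m + 1` if `γ > 0`, and `m` if `γ = 0`. -/
def obar (γ : Ordinal.{0}) (m : ℕ) : Ordinal := if γ = 0 then (m : Ordinal.{0}) else ω ^ γ * m + 1

/-- `C` is closed and unbounded in `o`. -/
def IsClubIn (C : Set Ordinal.{0}) (o : Ordinal.{0}) : Prop :=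
  C ⊆ Iio o ∧ (∀ x < o, ∃ y ∈ C, x ≤ y) ∧
    ∀ x < o, x ≠ 0 → (∀ y < x, ∃ z ∈ C, y < z ∧ z < x) → x ∈ C

/-- `S` is stationary in `o`: it meets every club subset of `o`. -/
def StationaryIn (S : Set Ordinal.{0}) (o : Ordinal.{0}) : Prop :=
  ∀ C, IsClubIn C o → (S ∩ C).Nonempty




section Aux

open Order

theorem iterDeriv_zero' (s : Set Ordinal.{0}) : iterDeriv s 0 = s :=
  Ordinal.limitRecOn_zero _ _ _

theorem iterDeriv_succ' (s : Set Ordinal.{0}) (o : Ordinal.{0}) :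
    iterDeriv s (Order.succ o) = deriv' (iterDeriv s o) :=
  Ordinal.limitRecOn_succ _ _ _ _

theorem iterDeriv_limit' (s : Set Ordinal.{0}) {o : Ordinal.{0}} (h : Order.IsSuccLimit o) :
    iterDeriv s o = ⋂ (p : Ordinal.{0}) (_ : p < o), iterDeriv s p :=
  Ordinal.limitRecOn_limit _ _ _ _ h

theorem deriv'_subset' (s : Set Ordinal.{0}) : deriv' s ⊆ s := fun _ h => h.1

theorem deriv'_mono' {s t : Set Ordinal.{0}} (h : s ⊆ t) : deriv' s ⊆ deriv' t := by
  rintro x ⟨hxs, hxc⟩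
  exact ⟨h hxs, closure_mono (diff_subset_diff_left h) hxc⟩

theorem iterDeriv_subset' (s : Set Ordinal.{0}) (o : Ordinal.{0}) : iterDeriv s o ⊆ s := by
  induction o using Ordinal.limitRecOn with
  | zero => rw [iterDeriv_zero']
  | add_one o ih => rw [Ordinal.add_one_eq_succ, iterDeriv_succ']; exact (deriv'_subset' _).trans ih
  | limit o ho ih =>
      rw [iterDeriv_limit' s ho]
      intro x hx
      exact (iterDeriv_zero' s) ▸ (mem_iInter₂.1 hx 0 ho.pos)

theorem iterDeriv_mono' {s t : Set Ordinal.{0}} (h : s ⊆ t) (o : Ordinal.{0}) :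
    iterDeriv s o ⊆ iterDeriv t o := by
  induction o using Ordinal.limitRecOn with
  | zero => rw [iterDeriv_zero', iterDeriv_zero']; exact h
  | add_one o ih => rw [Ordinal.add_one_eq_succ, iterDeriv_succ', iterDeriv_succ']; exact deriv'_mono' ih
  | limit o ho ih =>
      rw [iterDeriv_limit' s ho, iterDeriv_limit' t ho]
      exact fun x hx => mem_iInter₂.2 fun p hp => ih p hp (mem_iInter₂.1 hx p hp)

theorem ord_dvd_sub {a b c : Ordinal.{0}} (h1 : c ∣ a) (h2 : c ∣ b) : c ∣ a - b := by
  obtain ⟨t, rfl⟩ := h1; obtain ⟨s, rfl⟩ := h2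
  exact ⟨t - s, (Ordinal.mul_sub c t s).symm⟩

theorem zero_not_mem_deriv' (s : Set Ordinal.{0}) : (0 : Ordinal) ∉ deriv' s := by
  rintro ⟨-, hc⟩
  obtain ⟨y, hy1, hy2⟩ := mem_closure_iff.1 hc (Iio 1) isOpen_Iio (by simp)
  exact hy2.2 (Ordinal.lt_one_iff_zero.1 hy1)

/-- Upper bound on the iterated derivative of an interval of ordinals. -/
theorem iterDeriv_Iio_subset (β η : Ordinal.{0}) :
    iterDeriv (Iio β) η ⊆ {x | x < β ∧ ω ^ η ∣ x ∧ (η = 0 ∨ x ≠ 0)} := by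
  induction η using Ordinal.limitRecOn with
  | zero =>
      rw [iterDeriv_zero']
      exact fun x hx => ⟨hx, by simp, Or.inl rfl⟩
  | add_one η ih =>
      rw [Ordinal.add_one_eq_succ, iterDeriv_succ']
      intro x hx
      have hx' := deriv'_mono' ih hx
      obtain ⟨hxM, hxc⟩ := hx'
      obtain ⟨hxβ, ⟨m, rfl⟩, -⟩ := hxM
      have hω : (0:Ordinal) < ω ^ η := opow_pos η omega0_pos
      have hne : ω ^ η * m ≠ 0 := fun h0 => zero_not_mem_deriv' _ (h0 ▸ hx)
      refine ⟨hxβ, ?_, Or.inr hne⟩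
      -- suffices: ω ∣ m
      rcases Classical.em (ω ∣ m) with ⟨k, rfl⟩ | hnd
      · exact ⟨k, by rw [opow_succ, mul_assoc]⟩
      exfalso
      -- m is a successor: m = m' + 1
      have hm0 : m % ω ≠ 0 := fun h => hnd (Ordinal.dvd_of_mod_eq_zero h)
      obtain ⟨n, hn⟩ := Ordinal.lt_omega0.1 (Ordinal.mod_lt m Ordinal.omega0_ne_zero)
      obtain ⟨n, rfl⟩ : ∃ k : ℕ, n = k + 1 := by
        cases n with
        | zero => exact absurd (by simpa using hn) hm0
        | succ k => exact ⟨k, rfl⟩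
      set m' : Ordinal := ω * (m / ω) + n with hm'
      have hmeq : m = m' + 1 := by
        rw [hm', add_assoc]
        have := Ordinal.div_add_mod m ω
        rw [hn] at this
        simpa [Nat.cast_add, Nat.cast_one] using this.symm
      -- the punctured neighborhood misses the set
      obtain ⟨y, hy1, hy2⟩ := mem_closure_iff.1 hxc
        (Ioo (ω ^ η * m') (ω ^ η * m + 1)) isOpen_Ioo
        ⟨by rw [hmeq]; exact (mul_lt_mul_iff_right₀ hω).2 (lt_add_one m'), lt_add_one _⟩
      obtain ⟨⟨-, ⟨k, rfl⟩, -⟩, hyx⟩ := hy2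
      have h1 : m' < k := (mul_lt_mul_iff_right₀ hω).1 hy1.1
      have h2 : k ≤ m := by
        have h := hy1.2
        rw [Ordinal.add_one_eq_succ, Order.lt_succ_iff] at h
        exact le_of_not_gt fun hk => absurd ((mul_lt_mul_iff_right₀ hω).2 hk) (not_lt.2 h)
      have : k = m := le_antisymm h2 (by
        rw [hmeq, Ordinal.add_one_eq_succ]
        exact Order.succ_le_of_lt h1)
      exact hyx (by simp [this])
  | limit η hη ih =>
      rw [iterDeriv_limit' _ hη]
      intro x hx
      have hmem : ∀ p < η, x < β ∧ ω ^ p ∣ x ∧ (p = 0 ∨ x ≠ 0) :=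
        fun p hp => ih p hp (mem_iInter₂.1 hx p hp)
      have h1η : (1:Ordinal) < η := Ordinal.one_lt_of_isSuccLimit hη
      have hxβ : x < β := (hmem 0 hη.pos).1
      have hx0 : x ≠ 0 := (hmem 1 h1η).2.2.resolve_left one_ne_zero
      refine ⟨hxβ, ?_, Or.inr hx0⟩
      by_contra hdvd
      obtain ⟨q, r, hqr, hrlt⟩ : ∃ q r, ω ^ η * q + r = x ∧ r < ω ^ η :=
        ⟨_, _, Ordinal.div_add_mod x (ω ^ η), Ordinal.mod_lt x (opow_ne_zero η Ordinal.omega0_ne_zero)⟩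
      have hr0 : r ≠ 0 := fun h0 => hdvd ⟨q, by rw [← hqr, h0, add_zero]⟩
      obtain ⟨p, hpη, hrp⟩ := (Ordinal.lt_opow_of_isSuccLimit Ordinal.omega0_ne_zero hη).1 hrlt
      have hpx : ω ^ p ∣ x := (hmem p hpη).2.1
      have hreq : r = x - ω ^ η * q := by rw [← hqr, Ordinal.add_sub_cancel]
      have hrdvd : ω ^ p ∣ r := by
        rw [hreq]
        exact ord_dvd_sub hpx ((opow_dvd_opow ω hpη.le).mul_right q)
      exact absurd (Ordinal.le_of_dvd hr0 hrdvd) (not_le.2 hrp)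

end Aux


section Aux2

open Order

/-- Lower bound: nonzero multiples of `ω ^ η` survive `η` derivatives. -/
theorem subset_iterDeriv_Iio (β η : Ordinal.{0}) :
    {x : Ordinal.{0} | x ≠ 0 ∧ ω ^ η ∣ x ∧ x < β} ⊆ iterDeriv (Iio β) η := by
  induction η using Ordinal.limitRecOn with
  | zero =>
      rw [iterDeriv_zero']
      exact fun x hx => hx.2.2
  | add_one η ih =>
      rw [Ordinal.add_one_eq_succ, iterDeriv_succ']
      rintro x ⟨hx0, ⟨c, rfl⟩, hxβ⟩
      have hω : (0:Ordinal) < ω ^ η := opow_pos η omega0_pos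
      have hc0 : c ≠ 0 := by rintro rfl; simp at hx0
      -- x = ω ^ η * (ω * c)
      have hxe : ω ^ Order.succ η * c = ω ^ η * (ω * c) := by
        rw [opow_succ, mul_assoc]
      set m : Ordinal := ω * c with hm
      have hmlim : Order.IsSuccLimit m := Ordinal.isSuccLimit_mul_left Ordinal.isSuccLimit_omega0
        (pos_iff_ne_zero.2 hc0)
      have hmem : ∀ d : Ordinal, 0 < d → d < m →
          ω ^ η * d ∈ iterDeriv (Iio β) η \ {ω ^ Order.succ η * c} := by
        intro d hd0 hdm
        have hlt : ω ^ η * d < ω ^ Order.succ η * c := by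
          rw [hxe]; exact (mul_lt_mul_iff_right₀ hω).2 hdm
        refine ⟨ih ⟨?_, ⟨d, rfl⟩, hlt.trans hxβ⟩, fun h => absurd (mem_singleton_iff.1 h ▸ hlt) (lt_irrefl _)⟩
        exact _root_.mul_ne_zero hω.ne' hd0.ne'
      refine ⟨ih ⟨hx0, ⟨ω * c, hxe⟩, hxβ⟩, ?_⟩
      rw [Ordinal.mem_closure_iff_bsup]
      refine ⟨m, hmlim.pos.ne', fun d _ => ω ^ η * max d 1, ?_, ?_⟩
      · intro d hd
        exact hmem (max d 1) (lt_max_of_lt_right zero_lt_one) (max_lt hd (Ordinal.one_lt_of_isSuccLimit hmlim))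
      · apply le_antisymm
        · refine Ordinal.bsup_le fun d hd => ?_
          rw [hxe]
          exact (mul_le_mul_iff_right₀ hω).2 (max_lt hd (Ordinal.one_lt_of_isSuccLimit hmlim)).le
        · by_contra hlt
          rw [not_le, hxe] at hlt
          obtain ⟨d, hdm, hd⟩ := (Ordinal.lt_mul_iff_of_isSuccLimit hmlim).1 hlt
          have hle := Ordinal.le_bsup (fun d (_ : d < m) => ω ^ η * max d 1) d hdm
          have hdd : ω ^ η * d ≤ ω ^ η * max d 1 :=
            (mul_le_mul_iff_right₀ hω).2 (le_max_left d 1)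
          exact absurd (hdd.trans hle) (not_le.2 hd)
  | limit η hη ih =>
      rintro x ⟨hx0, hdvd, hxβ⟩
      rw [iterDeriv_limit' _ hη]
      exact mem_iInter₂.2 fun p hp => ih p hp ⟨hx0, (opow_dvd_opow ω hp.le).trans hdvd, hxβ⟩

end Aux2


section Aux3

variable {X Y : Set Ordinal.{0}}

open scoped Classical

/-- Extend a homeomorphism of subspaces to a map on ordinals. -/
def emap (e : X ≃ₜ Y) : Ordinal.{0} → Ordinal.{0} :=
  fun x => if h : x ∈ X then (e ⟨x, h⟩ : Ordinal) else 0

theorem emap_apply (e : X ≃ₜ Y) {x : Ordinal} (hx : x ∈ X) : emap e x = (e ⟨x, hx⟩ : Ordinal) :=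
  dif_pos hx

theorem emap_mem (e : X ≃ₜ Y) {x : Ordinal} (hx : x ∈ X) : emap e x ∈ Y := by
  rw [emap_apply e hx]; exact (e ⟨x, hx⟩).2

theorem emap_injOn (e : X ≃ₜ Y) : InjOn (emap e) X := by
  intro a ha b hb hab
  rw [emap_apply e ha, emap_apply e hb] at hab
  have := e.injective (Subtype.coe_injective hab)
  exact congrArg Subtype.val this

theorem emap_deriv'_subset (e : X ≃ₜ Y) {A : Set Ordinal.{0}} (hA : A ⊆ X) :
    emap e '' deriv' A ⊆ deriv' (emap e '' A) := by
  rintro _ ⟨x, ⟨hxA, hxc⟩, rfl⟩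
  have hxX : x ∈ X := hA hxA
  refine ⟨mem_image_of_mem _ hxA, ?_⟩
  set s : Set X := Subtype.val ⁻¹' (A \ {x}) with hs
  have h1 : (⟨x, hxX⟩ : X) ∈ closure s := by
    rw [closure_subtype, hs, Subtype.image_preimage_coe,
      inter_eq_self_of_subset_right ((diff_subset).trans hA)]
    exact hxc
  have h2 : e ⟨x, hxX⟩ ∈ closure (e '' s) := by
    rw [← e.image_closure]
    exact mem_image_of_mem _ h1
  rw [closure_subtype] at h2
  have h3 : (Subtype.val '' (e '' s)) ⊆ emap e '' A \ {((e ⟨x, hxX⟩ : Y) : Ordinal)} := by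
    rintro _ ⟨z, ⟨w, hw, rfl⟩, rfl⟩
    have hw' : (w : Ordinal) ∈ A \ {x} := hw
    constructor
    · exact ⟨w.1, hw'.1, by rw [emap_apply e w.2, Subtype.coe_eta]⟩
    · intro hbad
      rw [mem_singleton_iff] at hbad
      have : w = (⟨x, hxX⟩ : X) := e.injective (Subtype.coe_injective hbad)
      exact hw'.2 (show (w : Ordinal) ∈ ({x} : Set Ordinal) from congrArg Subtype.val this)
  rw [emap_apply e hxX]
  exact closure_mono h3 h2

theorem emap_iterDeriv_subset (e : X ≃ₜ Y) (η : Ordinal.{0}) :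
    emap e '' iterDeriv X η ⊆ iterDeriv Y η := by
  induction η using Ordinal.limitRecOn with
  | zero =>
      rw [iterDeriv_zero', iterDeriv_zero']
      rintro _ ⟨x, hx, rfl⟩
      exact emap_mem e hx
  | add_one o ih =>
      rw [Ordinal.add_one_eq_succ, iterDeriv_succ', iterDeriv_succ']
      exact (emap_deriv'_subset e (iterDeriv_subset' X o)).trans (deriv'_mono' ih)
  | limit o ho ih =>
      rw [iterDeriv_limit' _ ho, iterDeriv_limit' _ ho]
      rintro _ ⟨x, hx, rfl⟩
      exact mem_iInter₂.2 fun p hp => ih p hp ⟨x, mem_iInter₂.1 hx p hp, rfl⟩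

end Aux3

/-- `ω^γ` is not homeomorphic to any subspace of an ordinal `δ < ω^γ`. -/
theorem not_homeoCopy_omega_pow_of_lt (γ δ : Ordinal.{0}) (hγ : γ ≠ 0) (hδlt : δ < ω ^ γ) :
    ¬ HomeoCopy (ω ^ γ) (Iio δ) := by
  rintro ⟨t, hts, ⟨e⟩⟩
  have hIm := emap_iterDeriv_subset e
  rcases Ordinal.zero_or_succ_or_isSuccLimit γ with rfl | ⟨η, rfl⟩ | hγlim
  · exact hγ rfl
  · -- successor case: the η-th derivative of `Iio (ω ^ (η+1))` is infinite,
    -- but that of `Iio δ` is finite.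
    have hω : (0:Ordinal) < ω ^ η := opow_pos η Ordinal.omega0_pos
    have hinf : (iterDeriv (Iio (ω ^ Order.succ η)) η).Infinite := by
      apply Set.infinite_of_injective_forall_mem
        (f := fun n : ℕ => ω ^ η * ((n : Ordinal) + 1))
      · intro a b hab
        have h1 : ((a : Ordinal) + 1) = ((b : Ordinal) + 1) := by
          apply le_antisymm
          · exact (mul_le_mul_iff_right₀ hω).1 hab.le
          · exact (mul_le_mul_iff_right₀ hω).1 hab.ge
        have : ((a + 1 : ℕ) : Ordinal) = ((b + 1 : ℕ) : Ordinal) := by push_cast; exact h1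
        exact Nat.succ_injective (Nat.cast_injective this)
      · intro n
        apply subset_iterDeriv_Iio
        refine ⟨_root_.mul_ne_zero hω.ne' ?_, dvd_mul_right _ _, ?_⟩
        · exact (zero_lt_one.trans_le (le_add_self : (1:Ordinal) ≤ (n : Ordinal) + 1)).ne'
        · rw [opow_succ]
          refine (mul_lt_mul_iff_right₀ hω).2 ?_
          simpa using Ordinal.nat_lt_omega0 (n + 1)
    have hinft : (iterDeriv t η).Infinite := by
      have := hinf.image ((emap_injOn e).mono (iterDeriv_subset' _ _))
      exact this.mono (hIm η)
    -- finiteness below δ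
    obtain ⟨c, hcω, hδc⟩ := (Ordinal.lt_mul_iff_of_isSuccLimit Ordinal.isSuccLimit_omega0).1
      (by rwa [opow_succ] at hδlt)
    obtain ⟨n, rfl⟩ := Ordinal.lt_omega0.1 hcω
    have hfin : ({x : Ordinal | x < δ ∧ ω ^ η ∣ x ∧ (η = 0 ∨ x ≠ 0)}).Finite := by
      apply Set.Finite.subset (Set.Finite.image (fun k : ℕ => ω ^ η * k) (Set.finite_Iio n))
      rintro x ⟨hxδ, ⟨c, rfl⟩, -⟩
      have hc : c < (n : Ordinal) := (mul_lt_mul_iff_right₀ hω).1 (hxδ.trans hδc)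
      obtain ⟨m, rfl⟩ := Ordinal.lt_omega0.1 (hc.trans (Ordinal.nat_lt_omega0 n))
      exact ⟨m, Nat.cast_lt.1 hc, rfl⟩
    exact hinft (hfin.subset ((iterDeriv_mono' hts η).trans (iterDeriv_Iio_subset δ η)))
  · -- limit case
    obtain ⟨η₀, hη₀γ, hδη₀⟩ := (Ordinal.lt_opow_of_isSuccLimit Ordinal.omega0_ne_zero hγlim).1 hδlt
    set η := max η₀ 1 with hη
    have hηγ : η < γ := max_lt hη₀γ (Ordinal.one_lt_of_isSuccLimit hγlim)
    have hδη : δ < ω ^ η := hδη₀.trans_le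
      (opow_le_opow_right Ordinal.omega0_pos (le_max_left _ _))
    have hmem : ω ^ η ∈ iterDeriv (Iio (ω ^ γ)) η :=
      subset_iterDeriv_Iio _ _ ⟨(opow_pos η Ordinal.omega0_pos).ne', dvd_refl _,
        (Ordinal.opow_lt_opow_iff_right Ordinal.one_lt_omega0).2 hηγ⟩
    have h2 := (iterDeriv_mono' hts η).trans (iterDeriv_Iio_subset δ η)
      (hIm η ⟨_, hmem, rfl⟩)
    obtain ⟨hlt, hdvd, h0⟩ := h2
    have hη0 : η ≠ 0 := (zero_lt_one.trans_le (le_max_right η₀ 1)).ne'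
    have hx0 : emap e (ω ^ η) ≠ 0 := h0.resolve_left hη0
    exact absurd (((Ordinal.le_of_dvd hx0 hdvd).trans_lt hlt).trans hδη) (lt_irrefl _)

end
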